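/- For the algebra E ⊕ E^op with the exchange involution, the commutator of any two symmetric elements is central: if u, v ∈ E ⊕ E^op satisfy u^* = u and v^* = v (where (a,b)^* = (b,a)), then [u,v] = uv - vu lies in the center of E ⊕ E^op. Moreover there exist symmetric u, v with [u,v] ≠ 0. -/

import Mathlib

open MulOpposite

/-- The infinite-dimensional Grassmann (exterior) algebra over `F`. -/
noncomputable abbrev GrassmannAlg (F : Type*) [Field F] :=
  ExteriorAlgebra F (ℕ →₀ F)

section helpers

variable {F : Type*} [Field F]

open ExteriorAlgebra

local notation "E" => GrassmannAlg F

/-- supercommutation with a generator -/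
lemma grass_ι_comm (m : ℕ →₀ F) (x : E) :
    ι F m * x = CliffordAlgebra.involute x * ι F m := by
  induction x using CliffordAlgebra.induction with
  | algebraMap r => simp [Algebra.commutes]
  | ι n =>
      rw [CliffordAlgebra.involute_ι]
      rw [neg_mul]
      exact eq_neg_of_add_eq_zero_left (ι_add_mul_swap (R := F) m n)
  | mul a b ha hb => rw [← mul_assoc, ha, mul_assoc, hb, map_mul, mul_assoc]
  | add a b ha hb => rw [mul_add, ha, hb, map_add, add_mul]

/-- even (involute-fixed) elements are central -/
lemma grass_even_central {x : E} (hx : CliffordAlgebra.involute x = x) (g : E) :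
    g * x = x * g := by
  induction g using CliffordAlgebra.induction with
  | algebraMap r => exact Algebra.commutes r x
  | ι m => rw [grass_ι_comm, hx]
  | mul a b ha hb => rw [mul_assoc, hb, ← mul_assoc, ha, mul_assoc]
  | add a b ha hb => rw [add_mul, ha, hb, mul_add]

set_option maxHeartbeats 1000000 in
/-- commutators are central in the Grassmann algebra -/
lemma grass_comm_central [CharZero F] (a b g : E) :
    g * (a * b - b * a) = (a * b - b * a) * g := by
  classical
  set a' := CliffordAlgebra.involute a with ha'
  set b' := CliffordAlgebra.involute b with hb'
  set p := a + a' with hp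
  set q := a - a' with hq
  set r := b + b' with hr
  set s := b - b' with hs
  have hpc : ∀ g : E, g * p = p * g := fun g =>
    grass_even_central (by rw [hp, ha', map_add, CliffordAlgebra.involute_involute, add_comm]) g
  have hrc : ∀ g : E, g * r = r * g := fun g =>
    grass_even_central (by rw [hr, hb', map_add, CliffordAlgebra.involute_involute, add_comm]) g
  have hqi : CliffordAlgebra.involute q = -q := by
    rw [hq, ha', map_sub, CliffordAlgebra.involute_involute, neg_sub]
  have hsi : CliffordAlgebra.involute s = -s := by
    rw [hs, hb', map_sub, CliffordAlgebra.involute_involute, neg_sub]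
  have hqs : ∀ g : E, g * (q * s) = (q * s) * g := fun g =>
    grass_even_central (by rw [map_mul, hqi, hsi, neg_mul_neg]) g
  have hsq : ∀ g : E, g * (s * q) = (s * q) * g := fun g =>
    grass_even_central (by rw [map_mul, hqi, hsi, neg_mul_neg]) g
  have expand : (p + q) * (r + s) - (r + s) * (p + q)
      = (p * r - r * p) + (p * s - s * p) + (q * r - r * q) + (q * s - s * q) := by
    noncomm_ring
  have hzero : (p + q) * (r + s) - (r + s) * (p + q) = q * s - s * q := by
    rw [expand, hpc r, hrc q, hpc s, sub_self, sub_self, sub_self, zero_add, zero_add,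
      zero_add]
  have hsum : p + q = a + a := by rw [hp, hq]; abel
  have hsum' : r + s = b + b := by rw [hr, hs]; abel
  have h4 : (a + a) * (b + b) - (b + b) * (a + a) = (4 : ℕ) • (a * b - b * a) := by
    noncomm_ring
  have hw : (4 : ℕ) • (a * b - b * a) = q * s - s * q := by
    rw [← h4, ← hsum, ← hsum', hzero]
  have hc : ∀ g : E, g * ((4:ℕ) • (a * b - b * a)) = ((4:ℕ) • (a * b - b * a)) * g := by
    intro g; rw [hw]
    rw [mul_sub g (q * s) (s * q), sub_mul (q * s) (s * q) g, hqs g, hsq g]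
  have h4F : ((4:ℕ):F) ≠ 0 := by norm_num
  have h := hc g
  rw [mul_smul_comm, smul_mul_assoc, ← Nat.cast_smul_eq_nsmul F,
    ← Nat.cast_smul_eq_nsmul F] at h
  exact smul_right_injective E h4F h

/-- The alternating map computing the `(0,1)` coordinate determinant. -/
noncomputable def grassDet2 (F : Type*) [Field F] : (ℕ →₀ F) [⋀^Fin 2]→ₗ[F] F :=
  (Matrix.detRowAlternating).compLinearMap
    (LinearMap.pi fun i : Fin 2 => Finsupp.lapply (i : ℕ))

/-- The family of alternating maps used with `liftAlternating`. -/
noncomputable def grassF (F : Type*) [Field F] : ∀ i : ℕ, (ℕ →₀ F) [⋀^Fin i]→ₗ[F] F :=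
  Function.update (fun i => (0 : (ℕ →₀ F) [⋀^Fin i]→ₗ[F] F)) 2 (grassDet2 F)

lemma grassDet2_apply (v : Fin 2 → (ℕ →₀ F)) :
    grassDet2 F v = v 0 0 * v 1 1 - v 0 1 * v 1 0 := by
  simp [grassDet2, Matrix.det_fin_two]
  exact Matrix.det_fin_two _

lemma grass_lift_ι_mul_ι (m n : ℕ →₀ F) :
    liftAlternating (grassF F) (ι F m * ι F n) = grassDet2 F ![m, n] := by
  rw [liftAlternating_ι_mul, liftAlternating_ι]
  show ((grassF F) 2).curryLeft m ![n] = _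
  rw [grassF, Function.update_self]
  rfl

lemma grass_witness_ne [CharZero F] :
    ι F (Finsupp.single 0 (1:F)) * ι F (Finsupp.single 1 1)
      - ι F (Finsupp.single 1 1) * ι F (Finsupp.single 0 1) ≠ 0 := by
  intro h
  have h2 := congrArg (liftAlternating (grassF F)) h
  rw [map_sub, grass_lift_ι_mul_ι, grass_lift_ι_mul_ι, map_zero,
    grassDet2_apply, grassDet2_apply] at h2
  simp [Finsupp.single_apply] at h2

end helpers

/-- The exchange involution on `E ⊕ E^op`: `(a, b)* = (b, a)`. -/
def excInv {F : Type*} [Field F] (x : GrassmannAlg F × (GrassmannAlg F)ᵐᵒᵖ) :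
    GrassmannAlg F × (GrassmannAlg F)ᵐᵒᵖ :=
  (x.2.unop, op x.1)

/-- for `(E ⊕ E^op, exc)`, the commutator of any two symmetric elements
is central, and some such commutator is nonzero. -/
theorem stmt_2 (F : Type*) [Field F] [CharZero F] :
    (∀ u v : GrassmannAlg F × (GrassmannAlg F)ᵐᵒᵖ, excInv u = u → excInv v = v →
      u * v - v * u ∈ Set.center (GrassmannAlg F × (GrassmannAlg F)ᵐᵒᵖ)) ∧
    ∃ u v : GrassmannAlg F × (GrassmannAlg F)ᵐᵒᵖ, excInv u = u ∧ excInv v = v ∧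
      u * v - v * u ≠ 0 := by
  constructor
  · rintro ⟨a, a2⟩ ⟨b, b2⟩ hu hv
    have ha2 : a2 = op a := (Prod.ext_iff.mp hu).2.symm
    have hb2 : b2 = op b := (Prod.ext_iff.mp hv).2.symm
    subst ha2 hb2
    rw [Semigroup.mem_center_iff]
    intro g
    have h1 : g.1 * (a * b - b * a) = (a * b - b * a) * g.1 :=
      grass_comm_central a b g.1
    have h2 : unop g.2 * (b * a - a * b) = (b * a - a * b) * unop g.2 :=
      grass_comm_central b a (unop g.2)
    apply Prod.ext
    · show g.1 * (a * b - b * a) = (a * b - b * a) * g.1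
      exact h1
    · show g.2 * (op a * op b - op b * op a) = (op a * op b - op b * op a) * g.2
      apply unop_injective
      simp only [unop_mul, unop_sub, unop_op]
      exact h2.symm
  · refine ⟨(ExteriorAlgebra.ι F (Finsupp.single 0 1), op (ExteriorAlgebra.ι F (Finsupp.single 0 1))),
      (ExteriorAlgebra.ι F (Finsupp.single 1 1), op (ExteriorAlgebra.ι F (Finsupp.single 1 1))), rfl, rfl, fun h => ?_⟩
    exact grass_witness_ne (congrArg Prod.fst h)
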